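/- The set {(2^n, 2^n) : n ∈ ℕ}, viewed as a subset of ℤ², is not semilinear. -/

import Mathlib

/-- A linear subset of `ℤ^k`: `{b + n₁·p₁ + ⋯ + n_m·p_m : n₁, …, n_m ∈ ℕ}`. -/
def IsIntLinearSet {k : ℕ} (S : Set (Fin k → ℤ)) : Prop :=
  ∃ (b : Fin k → ℤ) (m : ℕ) (per : Fin m → (Fin k → ℤ)),
    S = {x | ∃ n : Fin m → ℕ, x = b + ∑ i, (n i : ℤ) • per i}

/-- A semilinear subset of `ℤ^k`: a finite union of linear sets. -/
def IsIntSemilinearSet {k : ℕ} (S : Set (Fin k → ℤ)) : Prop :=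
  ∃ (m : ℕ) (L : Fin m → Set (Fin k → ℤ)), (∀ i, IsIntLinearSet (L i)) ∧ S = ⋃ i, L i

/-- No nontrivial arithmetic progression consists entirely of powers of 2. -/
lemma ap_not_powers (b d : ℤ) (hd : d ≠ 0)
    (h : ∀ t : ℕ, ∃ n : ℕ, b + t * d = 2 ^ n) : False := by
  rcases hd.lt_or_gt with hneg | hpos
  · obtain ⟨n, hn⟩ := h (b.toNat + 1)
    have h1 : (0:ℤ) < 2 ^ n := pow_pos (by norm_num) n
    have h2 : b ≤ (b.toNat : ℤ) := Int.self_le_toNat b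
    have h3 : ((b.toNat + 1 : ℕ) : ℤ) = (b.toNat : ℤ) + 1 := by push_cast; ring
    rw [h3] at hn
    nlinarith
  · set T : ℤ := 2 * d + |b| with hT
    obtain ⟨n1, h1⟩ := h (T.toNat + 1)
    obtain ⟨n2, h2⟩ := h (T.toNat + 2)
    have hc1 : ((T.toNat + 1 : ℕ) : ℤ) = (T.toNat : ℤ) + 1 := by push_cast; ring
    have hc2 : ((T.toNat + 2 : ℕ) : ℤ) = (T.toNat : ℤ) + 2 := by push_cast; ring
    rw [hc1] at h1; rw [hc2] at h2
    have hTnn : (0:ℤ) ≤ T := by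
      have := abs_nonneg b; omega
    have hTle : T ≤ (T.toNat : ℤ) := Int.self_le_toNat T
    have hbabs : -|b| ≤ b := neg_abs_le b
    have hbig : 2 * d < b + ((T.toNat : ℤ) + 1) * d := by nlinarith
    have hdiff : (2:ℤ) ^ n2 = 2 ^ n1 + d := by linarith
    have hlt : n1 < n2 := by
      by_contra hle
      push_neg at hle
      have : (2:ℤ) ^ n2 ≤ 2 ^ n1 := pow_le_pow_right₀ (by norm_num) hle
      linarith
    have hdb : (2:ℤ) ^ (n1 + 1) ≤ 2 ^ n2 := pow_le_pow_right₀ (by norm_num) hlt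
    rw [pow_succ] at hdb
    nlinarith

/-- The set `{(2^n, 2^n) : n ∈ ℕ} ⊆ ℤ²` is not semilinear. -/
theorem powers_of_two_not_semilinear :
    ¬ IsIntSemilinearSet {x : Fin 2 → ℤ | ∃ n : ℕ, x = ![2 ^ n, 2 ^ n]} := by
  set S : Set (Fin 2 → ℤ) := {x : Fin 2 → ℤ | ∃ n : ℕ, x = ![2 ^ n, 2 ^ n]} with hSdef
  rintro ⟨m, L, hlin, hS⟩
  have hmem : ∀ n : ℕ, ∃ i, (![2 ^ n, 2 ^ n] : Fin 2 → ℤ) ∈ L i := by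
    intro n
    have hx : (![2 ^ n, 2 ^ n] : Fin 2 → ℤ) ∈ S := ⟨n, rfl⟩
    rw [hS] at hx
    simpa using hx
  choose f hf using hmem
  obtain ⟨i, hi⟩ := Finite.exists_infinite_fiber f
  have hinf : (f ⁻¹' {i}).Infinite := Set.infinite_coe_iff.mp hi
  obtain ⟨n1, hn1, n2, hn2, hne⟩ := hinf.nontrivial
  have hLS : L i ⊆ S := by rw [hS]; exact Set.subset_iUnion L i
  obtain ⟨b, m', per, hLi⟩ := hlin i
  have hbmem : b ∈ L i := by
    rw [hLi]
    exact ⟨0, by simp⟩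
  -- one of the two distinct points differs from b
  have hx : ∃ x ∈ L i, x ≠ b := by
    by_contra hcon
    push_neg at hcon
    have hi1 : f n1 = i := hn1
    have hi2 : f n2 = i := hn2
    have e1 := hcon _ (hi1 ▸ hf n1)
    have e2 := hcon _ (hi2 ▸ hf n2)
    apply hne
    have : (2:ℤ) ^ n1 = 2 ^ n2 := by
      have := congrFun (e1.trans e2.symm) 0
      simpa using this
    exact Nat.pow_right_injective (le_refl 2) (by exact_mod_cast this)
  obtain ⟨x, hxL, hxb⟩ := hx
  rw [hLi] at hxL
  obtain ⟨c, hc⟩ := hxL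
  set d : Fin 2 → ℤ := ∑ j, (c j : ℤ) • per j with hd
  have hdne : d ≠ 0 := by
    intro h0
    apply hxb
    rw [hc, h0, add_zero]
  -- every b + t • d lies in L i
  have hprog : ∀ t : ℕ, b + (t : ℤ) • d ∈ L i := by
    intro t
    rw [hLi]
    refine ⟨fun j => t * c j, ?_⟩
    rw [hd, Finset.smul_sum]
    congr 1
    apply Finset.sum_congr rfl
    intro j _
    rw [smul_smul]
    push_cast
    ring
  -- components
  have hbS : b ∈ S := hLS hbmem
  obtain ⟨a, ha⟩ := hbS
  have hb01 : b 0 = b 1 := by rw [ha]; simp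
  have hcomp : ∀ t : ℕ, ∃ n : ℕ, b 0 + t * d 0 = 2 ^ n ∧ b 1 + t * d 1 = 2 ^ n := by
    intro t
    have := hLS (hprog t)
    obtain ⟨n, hn⟩ := this
    refine ⟨n, ?_, ?_⟩
    · have := congrFun hn 0
      simpa [mul_comm] using this
    · have := congrFun hn 1
      simpa [mul_comm] using this
  have hd01 : d 0 = d 1 := by
    obtain ⟨n, hn0, hn1⟩ := hcomp 1
    push_cast at hn0 hn1
    omega
  have hd0 : d 0 ≠ 0 := by
    intro h0
    apply hdne
    have h1 : d 1 = 0 := hd01 ▸ h0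
    funext j
    fin_cases j
    · exact h0
    · exact h1
  exact ap_not_powers (b 0) (d 0) hd0 (fun t => (hcomp t).imp fun n hn => hn.1)
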